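/- Let p be an odd prime, Δ⁺ = (ℤ/pℤ)ˣ/⟨σ_{−1}⟩ (a cyclic group of order (p−1)/2), and N⁺ = Σ_{τ∈Δ⁺} τ ∈ ℤ[Δ⁺]. Then the quotient ℤ-module ℤ[Δ⁺]/(p·N⁺·ℤ[Δ⁺]) is isomorphic, as an abelian group, to ℤ^{(p−3)/2} ⊕ ℤ/pℤ. (Paper's Proposition 'bf_plus': BF(Y⁺) ≅ ℤ^{(p−3)/2} ⊕ ℤ/pℤ, since the Bowen–Franks operator of Y⁺ is multiplication by −p·N⁺ on ℤ[Δ⁺].) -/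

import Mathlib

/-- The group `Δ⁺ = (ℤ/pℤ)ˣ/⟨σ₋₁⟩`, the quotient of `Δ = (ℤ/pℤ)ˣ` by the subgroup generated
by `j = σ₋₁`. -/
def DeltaPlus (p : ℕ) [Fact p.Prime] : Type :=
  (ZMod p)ˣ ⧸ Subgroup.zpowers (-1 : (ZMod p)ˣ)

instance (p : ℕ) [Fact p.Prime] : CommGroup (DeltaPlus p) :=
  QuotientGroup.Quotient.commGroup (Subgroup.zpowers (-1 : (ZMod p)ˣ))

/-- The norm element `N⁺ = Σ_{τ ∈ Δ⁺} τ ∈ ℤ[Δ⁺]`. -/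
noncomputable def normPlus (p : ℕ) [Fact p.Prime] : MonoidAlgebra ℤ (DeltaPlus p) :=
  ∑ᶠ τ : DeltaPlus p, MonoidAlgebra.single τ (1 : ℤ)

instance instFiniteDeltaPlus (p : ℕ) [Fact p.Prime] : Finite (DeltaPlus p) :=
  inferInstanceAs (Finite ((ZMod p)ˣ ⧸ Subgroup.zpowers (-1 : (ZMod p)ˣ)))

noncomputable instance instFintypeDeltaPlus (p : ℕ) [Fact p.Prime] : Fintype (DeltaPlus p) :=
  Fintype.ofFinite _

lemma normPlus_eq (p : ℕ) [Fact p.Prime] :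
    normPlus p = ∑ τ : DeltaPlus p, MonoidAlgebra.single τ (1 : ℤ) := by
  rw [normPlus, finsum_eq_sum_of_fintype]

lemma normPlus_apply (p : ℕ) [Fact p.Prime] (g : DeltaPlus p) :
    (normPlus p).coeff g = 1 := by
  classical
  rw [normPlus_eq]
  rw [MonoidAlgebra.coeff_sum, Finsupp.finset_sum_apply]
  simp [MonoidAlgebra.coeff_single, Finsupp.single_apply]

lemma single_mul_normPlus (p : ℕ) [Fact p.Prime] (g : DeltaPlus p) (c : ℤ) :
    MonoidAlgebra.single g c * normPlus p = c • normPlus p := by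
  rw [normPlus_eq, Finset.mul_sum, Finset.smul_sum]
  refine Fintype.sum_equiv (Equiv.mulLeft g) _ _ (fun τ => ?_)
  rw [MonoidAlgebra.single_mul_single, mul_one]
  simp [Finsupp.smul_single]

lemma mul_normPlus (p : ℕ) [Fact p.Prime] (a : MonoidAlgebra ℤ (DeltaPlus p)) :
    ∃ k : ℤ, a * normPlus p = k • normPlus p := by
  induction a using MonoidAlgebra.induction_linear with
  | zero => exact ⟨0, by simp⟩
  | add f g hf hg =>
    obtain ⟨k1, h1⟩ := hf; obtain ⟨k2, h2⟩ := hg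
    exact ⟨k1 + k2, by rw [add_mul, h1, h2, add_smul]⟩
  | single g c => exact ⟨c, single_mul_normPlus p g c⟩

lemma card_deltaPlus (p : ℕ) [Fact p.Prime] (hp : Odd p) :
    Nat.card (DeltaPlus p) = (p - 1) / 2 := by
  have hp3 : 3 ≤ p := by
    have h2 := (Fact.out : p.Prime).two_le
    obtain ⟨k, hk⟩ := hp; omega
  haveI : Fact (2 < p) := ⟨by omega⟩
  have hord : orderOf (-1 : (ZMod p)ˣ) = 2 := by
    refine orderOf_eq_prime (by rw [neg_one_sq]) ?_
    intro h
    exact ZMod.neg_one_ne_one (by simpa using congrArg (Units.val) h)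
  have hcards : Nat.card (Subgroup.zpowers (-1 : (ZMod p)ˣ)) = 2 := by
    rw [Nat.card_zpowers, hord]
  have hmul := Subgroup.index_mul_card (Subgroup.zpowers (-1 : (ZMod p)ˣ))
  rw [hcards] at hmul
  have hcardG : Nat.card (ZMod p)ˣ = p - 1 := by
    rw [Nat.card_eq_fintype_card, ZMod.card_units_eq_totient, Nat.totient_prime Fact.out]
  rw [hcardG] at hmul
  have : Nat.card (DeltaPlus p) = (Subgroup.zpowers (-1 : (ZMod p)ˣ)).index := rfl
  omega

lemma ma_add_apply {p : ℕ} [Fact p.Prime] (a b : MonoidAlgebra ℤ (DeltaPlus p))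
    (g : DeltaPlus p) : (a + b).coeff g = a.coeff g + b.coeff g :=
  Finsupp.add_apply a.coeff b.coeff g

/-- Paper's Proposition `bf_plus`: for an odd prime `p`, the quotient
`ℤ[Δ⁺]/(p·N⁺·ℤ[Δ⁺])` is isomorphic as an abelian group to `ℤ^{(p−3)/2} ⊕ ℤ/pℤ`. -/
theorem stmt13 (p : ℕ) [Fact p.Prime] (hp : Odd p) :
    Nonempty
      ((MonoidAlgebra ℤ (DeltaPlus p) ⧸ Ideal.span {(p : ℤ) • normPlus p}) ≃+
        ((Fin ((p - 3) / 2) → ℤ) × ZMod p)) := by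
  classical
  have hp3 : 3 ≤ p := by
    have h2 := (Fact.out : p.Prime).two_le
    obtain ⟨k, hk⟩ := hp; omega
  -- cardinality of the subtype of non-identity elements
  have hcard : Fintype.card {g : DeltaPlus p // ¬ g = 1} = (p - 3) / 2 := by
    rw [Fintype.card_subtype_compl]
    rw [Fintype.card_subtype_eq]
    have := card_deltaPlus p hp
    rw [Nat.card_eq_fintype_card] at this
    obtain ⟨k, hk⟩ := hp
    omega
  obtain ⟨e⟩ : Nonempty ({g : DeltaPlus p // ¬ g = 1} ≃ Fin ((p - 3) / 2)) :=
    ⟨Fintype.equivFinOfCardEq hcard⟩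
  -- the additive homomorphism
  let φ : MonoidAlgebra ℤ (DeltaPlus p) →+ ((Fin ((p - 3) / 2) → ℤ) × ZMod p) :=
    AddMonoidHom.mk'
      (fun f => (fun i => f.coeff (e.symm i).1 - f.coeff 1, ((f.coeff 1 : ℤ) : ZMod p)))
      (by
        intro a b
        refine Prod.ext ?_ ?_
        · funext i
          simp only [ma_add_apply, Prod.fst_add, Pi.add_apply]
          ring
        · simp only [ma_add_apply, Prod.snd_add]
          push_cast
          ring)
  have hφ : ∀ f : MonoidAlgebra ℤ (DeltaPlus p),
      φ f = (fun i => f.coeff (e.symm i).1 - f.coeff 1, ((f.coeff 1 : ℤ) : ZMod p)) := fun _ => rfl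
  -- surjectivity
  have hsurj : Function.Surjective φ := by
    rintro ⟨v, c⟩
    obtain ⟨c', hc'⟩ := ZMod.intCast_surjective (n := p) c
    refine ⟨MonoidAlgebra.ofCoeff (Finsupp.equivFunOnFinite.symm
      (fun g => if h : g = 1 then c' else v (e ⟨g, h⟩) + c')), ?_⟩
    rw [hφ, MonoidAlgebra.coeff_ofCoeff]
    have happ : ∀ g : DeltaPlus p,
        (Finsupp.equivFunOnFinite.symm
          (fun g => if h : g = 1 then c' else v (e ⟨g, h⟩) + c') : DeltaPlus p →₀ ℤ) g
        = if h : g = 1 then c' else v (e ⟨g, h⟩) + c' := by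
      intro g; rfl
    have h1 : ∀ i : Fin ((p - 3) / 2),
        (Finsupp.equivFunOnFinite.symm
          (fun g => if h : g = 1 then c' else v (e ⟨g, h⟩) + c') : DeltaPlus p →₀ ℤ)
          (e.symm i).1 = v i + c' := by
      intro i
      rw [happ, dif_neg (e.symm i).2, Subtype.coe_eta, e.apply_symm_apply]
    have h2 : (Finsupp.equivFunOnFinite.symm
          (fun g => if h : g = 1 then c' else v (e ⟨g, h⟩) + c') : DeltaPlus p →₀ ℤ) 1 = c' := by
      rw [happ, dif_pos rfl]
    refine Prod.ext ?_ ?_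
    · funext i
      show _ - _ = v i
      rw [h1, h2]
      ring
    · show ((_ : ℤ) : ZMod p) = c
      rw [h2]
      exact hc'
  -- kernel computation
  have hker : (Ideal.span {(p : ℤ) • normPlus p}).toAddSubgroup = φ.ker := by
    ext f
    constructor
    · intro hf
      rw [Submodule.mem_toAddSubgroup, Ideal.mem_span_singleton'] at hf
      obtain ⟨a, ha⟩ := hf
      obtain ⟨k, hk⟩ := mul_normPlus p a
      have hf' : f = ((p : ℤ) * k) • normPlus p := by
        rw [← ha, mul_smul_comm, hk, smul_smul]
      rw [AddMonoidHom.mem_ker, hφ, hf']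
      have hv : ∀ g : DeltaPlus p, (((p : ℤ) * k) • normPlus p).coeff g = (p : ℤ) * k := by
        intro g
        rw [MonoidAlgebra.coeff_smul_apply, normPlus_apply, smul_eq_mul, mul_one]
      refine Prod.ext ?_ ?_
      · funext i
        simp only [hv, sub_self, Prod.fst_zero, Pi.zero_apply]
      · simp only [hv, Prod.snd_zero]
        push_cast
        simp
    · intro hf
      rw [AddMonoidHom.mem_ker, hφ, Prod.mk_eq_zero] at hf
      obtain ⟨h1, h2⟩ := hf
      have hdvd : (p : ℤ) ∣ f.coeff 1 := by
        rwa [ZMod.intCast_zmod_eq_zero_iff_dvd] at h2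
      obtain ⟨m, hm⟩ := hdvd
      have hconst : ∀ g : DeltaPlus p, f.coeff g = (p : ℤ) * m := by
        intro g
        by_cases hg : g = 1
        · rw [hg, hm]
        · have h3 := congrFun h1 (e ⟨g, hg⟩)
          simp only [e.symm_apply_apply, Pi.zero_apply] at h3
          have h4 : f.coeff g - f.coeff 1 = 0 := h3
          omega
      rw [Submodule.mem_toAddSubgroup, Ideal.mem_span_singleton']
      refine ⟨MonoidAlgebra.single 1 m, ?_⟩
      rw [mul_smul_comm, single_mul_normPlus, smul_smul]
      refine MonoidAlgebra.ext (Finsupp.ext fun g => ?_)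
      rw [hconst g, MonoidAlgebra.coeff_smul_apply, normPlus_apply, smul_eq_mul, mul_one, mul_comm]
  exact ⟨(QuotientAddGroup.quotientAddEquivOfEq hker).trans
    (QuotientAddGroup.quotientKerEquivOfSurjective φ hsurj)⟩
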